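/- For any tree T on at least three vertices, γ_{r2}(T) ≥ γ(T) + ⌈(ℓ(T) − p(T))/Δ(T)⌉, where ℓ(T) is the number of leaves, p(T) the number of penultimate vertices, and Δ(T) the maximum degree. -/

import Mathlib

open Finset

/-- A `k`-rainbow dominating function: every vertex assigned `∅` sees all `k` colors
among its neighbors. -/
def SimpleGraph.IsRainbowDF {V : Type*} {k : ℕ} (G : SimpleGraph V)
    (f : V → Finset (Fin k)) : Prop :=
  ∀ v, f v = ∅ → ∀ c : Fin k, ∃ u, G.Adj v u ∧ c ∈ f u

/-- The `k`-rainbow domination number. -/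
noncomputable def SimpleGraph.rainbowNum {V : Type*} [Fintype V] (G : SimpleGraph V)
    (k : ℕ) : ℕ :=
  sInf {w | ∃ f : V → Finset (Fin k), G.IsRainbowDF f ∧ w = ∑ v, (f v).card}

/-- `S` is a dominating set of `G`. -/
def SimpleGraph.IsDomSet {V : Type*} (G : SimpleGraph V) (S : Set V) : Prop :=
  ∀ v, v ∉ S → ∃ u ∈ S, G.Adj v u

/-- The domination number. -/
noncomputable def SimpleGraph.domNum {V : Type*} [Fintype V] (G : SimpleGraph V) : ℕ :=
  sInf {n | ∃ S : Finset V, G.IsDomSet ↑S ∧ n = S.card}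

section Aux
variable {V : Type*} [Fintype V] [DecidableEq V] (G : SimpleGraph V) [DecidableRel G.Adj]

omit [DecidableEq V] [DecidableRel G.Adj] in
lemma aux_exists_adj (hc : G.Connected) (h2 : 2 ≤ Fintype.card V) (v : V) :
    ∃ u, G.Adj v u := by
  obtain ⟨u, hu⟩ := Fintype.exists_ne_of_one_lt_card (by omega) v
  obtain ⟨p⟩ := hc.preconnected v u
  cases p with
  | nil => exact absurd rfl hu
  | cons h _ => exact ⟨_, h⟩

omit [DecidableEq V] in
lemma aux_nbr_singleton {u v : V} (h1 : G.degree u = 1) (h : G.Adj u v) :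
    G.neighborFinset u = {v} := by
  obtain ⟨a, ha⟩ := Finset.card_eq_one.mp (by rw [G.card_neighborFinset_eq_degree]; exact h1)
  have hv : v ∈ G.neighborFinset u := by simpa using h
  rw [ha] at hv ⊢
  simp at hv
  rw [hv]

omit [DecidableEq V] in
lemma aux_uniq_nbr {u v w : V} (h1 : G.degree u = 1) (hv : G.Adj u v) (hw : G.Adj u w) :
    v = w := by
  have hs := aux_nbr_singleton G h1 hv
  have : w ∈ G.neighborFinset u := by simpa using hw
  rw [hs] at this
  simp at this
  exact this.symm

lemma aux_support_not_leaf (hc : G.Connected) (h3 : 3 ≤ Fintype.card V)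
    {u v : V} (h : G.Adj v u) (hu : G.degree u = 1) (hv : G.degree v = 1) : False := by
  have hnv : G.neighborFinset v = {u} := aux_nbr_singleton G hv h
  have hnu : G.neighborFinset u = {v} := aux_nbr_singleton G hu h.symm
  have hww : ((univ : Finset V) \ {u, v}).Nonempty := by
    rw [← Finset.card_pos, Finset.card_sdiff_of_subset (Finset.subset_univ _)]
    have h2 : ({u, v} : Finset V).card ≤ 2 :=
      le_trans (Finset.card_insert_le _ _) (by simp)
    have := Finset.card_univ (α := V)
    omega
  obtain ⟨w, hw⟩ := hww
  simp only [Finset.mem_sdiff, Finset.mem_univ, Finset.mem_insert, Finset.mem_singleton,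
    true_and, not_or] at hw
  have key : ∀ x y : V, G.Walk x y → (x = v ∨ x = u) → (y = v ∨ y = u) := by
    intro x y p
    induction p with
    | nil => exact id
    | @cons a b c hab p ih =>
      intro hx
      apply ih
      rcases hx with rfl | rfl
      · right
        have hb : b ∈ G.neighborFinset a := by simpa using hab
        rw [hnv] at hb
        simpa using hb
      · left
        have hb : b ∈ G.neighborFinset a := by simpa using hab
        rw [hnu] at hb
        simpa using hb
  obtain ⟨p⟩ := hc.preconnected v w
  rcases key v w p (Or.inl rfl) with rfl | rfl
  · exact hw.2 rfl
  · exact hw.1 rfl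

lemma aux_arith {a d s : ℕ} (h1 : 1 ≤ a) (h2 : a ≤ d) (h3 : a ≤ s) :
    a + d ≤ 1 + d * s := by nlinarith

end Aux

/-- For any tree `T` on at least three vertices,
`γ_{r2}(T) ≥ γ(T) + ⌈(ℓ(T) − p(T))/Δ(T)⌉`, where `ℓ(T)` is the number of leaves,
`p(T)` the number of penultimate vertices (vertices adjacent to a leaf) and `Δ(T)`
the maximum degree. -/
theorem rainbow2_ge_domNum_add {V : Type*} [Fintype V] [DecidableEq V]
    (T : SimpleGraph V) [DecidableRel T.Adj] (hT : T.IsTree)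
    (hn : 3 ≤ Fintype.card V) :
    (T.domNum : ℤ) +
        ⌈(((univ.filter fun v => T.degree v = 1).card : ℚ) -
            ((univ.filter fun v => ∃ u, T.Adj v u ∧ T.degree u = 1).card : ℚ)) /
          (T.maxDegree : ℚ)⌉ ≤ (T.rainbowNum 2 : ℤ) := by
  obtain ⟨hconn, -⟩ := hT
  set L := univ.filter fun v => T.degree v = 1 with hLdef
  set P := univ.filter fun v => ∃ u, T.Adj v u ∧ T.degree u = 1 with hPdef
  classical
  have hV : Nonempty V := Fintype.card_pos_iff.mp (by omega)
  -- a minimum rainbow dominating function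
  have hrb : T.rainbowNum 2 ∈
      {w | ∃ f : V → Finset (Fin 2), T.IsRainbowDF f ∧ w = ∑ v, (f v).card} := by
    apply Nat.sInf_mem
    refine ⟨_, fun _ => (univ : Finset (Fin 2)), fun v hv => ?_, rfl⟩
    exact absurd hv Finset.univ_nonempty.ne_empty
  obtain ⟨f, hf, hw⟩ := hrb
  have hdegpos : ∀ v : V, 0 < T.degree v := fun v => by
    obtain ⟨u, hu⟩ := aux_exists_adj T hconn (by omega) v
    exact (T.degree_pos_iff_exists_adj v).mpr ⟨u, hu⟩
  have hΔ : 1 ≤ T.maxDegree :=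
    le_trans (hdegpos (Classical.arbitrary V)) (T.degree_le_maxDegree _)
  -- a leaf with empty label forces its support to have both colors
  have hforce : ∀ {u v : V}, T.degree u = 1 → T.Adj u v → f u = ∅ → (f v).card = 2 := by
    intro u v h1 h hfu
    have hc0 := hf u hfu 0
    have hc1 := hf u hfu 1
    obtain ⟨a, ha, h0a⟩ := hc0
    obtain ⟨b, hb, h1b⟩ := hc1
    have hav : a = v := aux_uniq_nbr T h1 ha h
    have hbv : b = v := aux_uniq_nbr T h1 hb h
    rw [hav] at h0a
    rw [hbv] at h1b
    have hsub : ({0, 1} : Finset (Fin 2)) ⊆ f v := by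
      intro c hc
      simp only [Finset.mem_insert, Finset.mem_singleton] at hc
      rcases hc with rfl | rfl
      · exact h0a
      · exact h1b
    have h2 : 2 ≤ (f v).card := by
      calc 2 = ({0, 1} : Finset (Fin 2)).card := by decide
        _ ≤ (f v).card := Finset.card_le_card hsub
    have h2' : (f v).card ≤ 2 := le_trans (Finset.card_le_univ _) (by simp)
    omega
  -- supports are not leaves
  have hPL : ∀ v ∈ P, T.degree v ≠ 1 := by
    intro v hv hdeg
    rw [hPdef, mem_filter] at hv
    obtain ⟨-, u, hadj, hu⟩ := hv
    exact aux_support_not_leaf T hconn hn hadj hu hdeg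
  set N := univ.filter (fun v => f v ≠ ∅) with hNdef
  set S0 := P.filter (fun v => f v = ∅) with hS0def
  set V2 := univ.filter (fun v => (f v).card = 2) with hV2def
  set D := (N \ L) ∪ S0 with hDdef
  have hmemNL : ∀ v : V, v ∈ N \ L ↔ (f v ≠ ∅ ∧ T.degree v ≠ 1) := by
    intro v
    simp [hNdef, hLdef]
  have hdom : T.IsDomSet ↑D := by
    intro v hv
    rw [Finset.mem_coe] at hv
    by_cases hvL : T.degree v = 1
    · obtain ⟨u, hu⟩ := aux_exists_adj T hconn (by omega) v
      have huP : u ∈ P := by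
        rw [hPdef, mem_filter]
        exact ⟨mem_univ _, v, hu.symm, hvL⟩
      have huD : u ∈ D := by
        by_cases h : f u = ∅
        · exact mem_union_right _ (by rw [hS0def, mem_filter]; exact ⟨huP, h⟩)
        · exact mem_union_left _ ((hmemNL u).mpr ⟨h, hPL u huP⟩)
      exact ⟨u, Finset.mem_coe.mpr huD, hu⟩
    · have hfv : f v = ∅ := by
        by_contra h
        exact hv (mem_union_left _ ((hmemNL v).mpr ⟨h, hvL⟩))
      obtain ⟨u, hadj, hcu⟩ := hf v hfv 0
      by_cases hu1 : T.degree u = 1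
      · exfalso
        apply hv
        have hvP : v ∈ P := by
          rw [hPdef, mem_filter]
          exact ⟨mem_univ _, u, hadj, hu1⟩
        exact mem_union_right _ (by rw [hS0def, mem_filter]; exact ⟨hvP, hfv⟩)
      · have hfu : f u ≠ ∅ := fun h => by simp [h] at hcu
        exact ⟨u, Finset.mem_coe.mpr (mem_union_left _ ((hmemNL u).mpr ⟨hfu, hu1⟩)), hadj⟩
  have hγ : T.domNum ≤ (N \ L).card + S0.card := by
    have h1 : T.domNum ≤ D.card := Nat.sInf_le ⟨D, hdom, rfl⟩
    exact le_trans h1 (Finset.card_union_le _ _)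
  -- weight lower bound
  have hwge : (N \ L).card + (V2 \ L).card + ∑ u ∈ L, (f u).card ≤ T.rainbowNum 2 := by
    rw [hw]
    have hsplit : ∑ v ∈ univ \ L, (f v).card + ∑ v ∈ L, (f v).card = ∑ v, (f v).card :=
      Finset.sum_sdiff (Finset.subset_univ L)
    have hsub : N \ L ⊆ univ \ L :=
      Finset.sdiff_subset_sdiff (Finset.subset_univ N) le_rfl
    have h1 : ∑ v ∈ N \ L, (f v).card ≤ ∑ v ∈ univ \ L, (f v).card :=
      Finset.sum_le_sum_of_subset hsub
    have hEq : (N \ L).filter (fun v => (f v).card = 2) = V2 \ L := by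
      ext v
      simp only [hNdef, hV2def, hLdef, mem_filter, mem_sdiff, mem_univ, true_and]
      constructor
      · rintro ⟨⟨-, h⟩, h2⟩
        exact ⟨h2, h⟩
      · rintro ⟨h2, h⟩
        refine ⟨⟨fun he => ?_, h⟩, h2⟩
        rw [he] at h2
        simp at h2
    have h2 : (N \ L).card + (V2 \ L).card ≤ ∑ v ∈ N \ L, (f v).card := by
      have hpt : ∀ v ∈ N \ L, 1 + (if (f v).card = 2 then 1 else 0) ≤ (f v).card := by
        intro v hv
        have hne : f v ≠ ∅ := ((hmemNL v).mp hv).1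
        have hpos : 0 < (f v).card := Finset.card_pos.mpr (Finset.nonempty_iff_ne_empty.mpr hne)
        by_cases hc : (f v).card = 2
        · rw [if_pos hc]; omega
        · rw [if_neg hc]; omega
      calc (N \ L).card + (V2 \ L).card
          = ∑ v ∈ N \ L, 1 + ∑ v ∈ N \ L, (if (f v).card = 2 then 1 else 0) := by
            rw [Finset.sum_const, smul_eq_mul, mul_one, Finset.sum_boole, hEq, Nat.cast_id]
        _ = ∑ v ∈ N \ L, (1 + if (f v).card = 2 then 1 else 0) := by
            rw [Finset.sum_add_distrib]
        _ ≤ ∑ v ∈ N \ L, (f v).card := Finset.sum_le_sum hpt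
    omega
  -- the leaf-counting inequality
  have hcount : L.card + T.maxDegree * S0.card ≤
      P.card + T.maxDegree * ((V2 \ L).card + ∑ u ∈ L, (f u).card) := by
    have hcover : L = P.biUnion (fun v => L.filter (fun u => T.Adj v u)) := by
      apply Finset.Subset.antisymm
      · intro u hu
        have hu1 : T.degree u = 1 := by
          rw [hLdef, mem_filter] at hu
          exact hu.2
        obtain ⟨v, hv⟩ := aux_exists_adj T hconn (by omega) u
        refine Finset.mem_biUnion.mpr ⟨v, ?_, ?_⟩
        · rw [hPdef, mem_filter]
          exact ⟨mem_univ _, u, hv.symm, hu1⟩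
        · rw [mem_filter]
          exact ⟨hu, hv.symm⟩
      · intro u hu
        obtain ⟨v, -, hu⟩ := Finset.mem_biUnion.mp hu
        exact Finset.mem_of_mem_filter u hu
    have hdisj : ∀ v ∈ P, ∀ v' ∈ P, v ≠ v' →
        Disjoint (L.filter (fun u => T.Adj v u)) (L.filter (fun u => T.Adj v' u)) := by
      intro v _ v' _ hne
      rw [Finset.disjoint_left]
      intro u hu hu'
      rw [mem_filter] at hu hu'
      have hdu : T.degree u = 1 := by
        have := hu.1
        rw [hLdef, mem_filter] at this
        exact this.2
      exact hne (aux_uniq_nbr T hdu hu.2.symm hu'.2.symm)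
    have hdisj' : Set.PairwiseDisjoint (↑P : Set V) (fun v => L.filter (fun u => T.Adj v u)) :=
      fun a ha b hb hne => hdisj a ha b hb hne
    have hcardL : L.card = ∑ v ∈ P, (L.filter (fun u => T.Adj v u)).card := by
      conv_lhs => rw [hcover]
      exact Finset.card_biUnion hdisj
    have hsumL : ∑ u ∈ L, (f u).card =
        ∑ v ∈ P, ∑ u ∈ L.filter (fun u => T.Adj v u), (f u).card := by
      conv_lhs => rw [hcover]
      exact Finset.sum_biUnion hdisj'
    have hper : ∀ v ∈ P,
        (L.filter (fun u => T.Adj v u)).card + T.maxDegree * (if f v = ∅ then 1 else 0)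
          ≤ 1 + T.maxDegree * ((if (f v).card = 2 then 1 else 0)
              + ∑ u ∈ L.filter (fun u => T.Adj v u), (f u).card) := by
      intro v hv
      set A := L.filter (fun u => T.Adj v u) with hAdef
      have hAnb : A ⊆ T.neighborFinset v := by
        intro u hu
        rw [hAdef, mem_filter] at hu
        rw [SimpleGraph.mem_neighborFinset]
        exact hu.2
      have hAdeg : A.card ≤ T.maxDegree := by
        calc A.card ≤ (T.neighborFinset v).card := Finset.card_le_card hAnb
          _ = T.degree v := T.card_neighborFinset_eq_degree v
          _ ≤ T.maxDegree := T.degree_le_maxDegree v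
      have hA1 : 1 ≤ A.card := by
        rw [hPdef, mem_filter] at hv
        obtain ⟨-, u, hadj, hdu⟩ := hv
        refine Finset.card_pos.mpr ⟨u, ?_⟩
        rw [hAdef, mem_filter]
        refine ⟨?_, hadj⟩
        rw [hLdef, mem_filter]
        exact ⟨mem_univ _, hdu⟩
      by_cases h2 : (f v).card = 2
      · have he : (if f v = ∅ then 1 else 0) = 0 := by
          rw [if_neg]
          intro h
          rw [h] at h2
          simp at h2
        rw [he, if_pos h2, Nat.mul_zero, Nat.add_zero]
        have hstep : T.maxDegree * 1 ≤
            T.maxDegree * (1 + ∑ u ∈ A, (f u).card) :=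
          Nat.mul_le_mul_left _ (by omega)
        rw [Nat.mul_one] at hstep
        omega
      · have hfA : ∀ u ∈ A, 1 ≤ (f u).card := by
          intro u hu
          rw [hAdef, mem_filter] at hu
          have hdu : T.degree u = 1 := by
            have := hu.1
            rw [hLdef, mem_filter] at this
            exact this.2
          rcases Nat.eq_zero_or_pos (f u).card with h0 | h0
          · exfalso
            have hfu : f u = ∅ := Finset.card_eq_zero.mp h0
            exact h2 (hforce hdu hu.2.symm hfu)
          · exact h0
        have hAs : A.card ≤ ∑ u ∈ A, (f u).card := by
          calc A.card = ∑ _u ∈ A, 1 := by simp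
            _ ≤ ∑ u ∈ A, (f u).card := Finset.sum_le_sum hfA
        rw [if_neg h2, Nat.zero_add]
        have hmain' : A.card + T.maxDegree ≤ 1 + T.maxDegree * ∑ u ∈ A, (f u).card :=
          aux_arith hA1 hAdeg (le_trans hAs le_rfl)
        by_cases he : f v = ∅
        · rw [if_pos he, Nat.mul_one]
          exact hmain'
        · rw [if_neg he, Nat.mul_zero, Nat.add_zero]
          omega
    have hsummed := Finset.sum_le_sum hper
    have hLHS : ∑ v ∈ P, ((L.filter (fun u => T.Adj v u)).card
        + T.maxDegree * (if f v = ∅ then 1 else 0))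
        = L.card + T.maxDegree * S0.card := by
      rw [Finset.sum_add_distrib, ← Finset.mul_sum, Finset.sum_boole, Nat.cast_id,
        ← hcardL, hS0def]
    have hRHS : ∑ v ∈ P, (1 + T.maxDegree * ((if (f v).card = 2 then 1 else 0)
        + ∑ u ∈ L.filter (fun u => T.Adj v u), (f u).card))
        = P.card + T.maxDegree * ((P.filter (fun v => (f v).card = 2)).card
            + ∑ u ∈ L, (f u).card) := by
      rw [Finset.sum_add_distrib, Finset.sum_const, smul_eq_mul, mul_one,
        ← Finset.mul_sum, Finset.sum_add_distrib, Finset.sum_boole, Nat.cast_id, ← hsumL]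
    rw [hLHS, hRHS] at hsummed
    have hfil2 : (P.filter (fun v => (f v).card = 2)).card ≤ (V2 \ L).card := by
      apply Finset.card_le_card
      intro v hv
      rw [mem_filter] at hv
      rw [Finset.mem_sdiff]
      constructor
      · rw [hV2def, mem_filter]
        exact ⟨mem_univ _, hv.2⟩
      · intro hvL
        have : T.degree v = 1 := by
          rw [hLdef, mem_filter] at hvL
          exact hvL.2
        exact hPL v hv.1 this
    have hmul : T.maxDegree * (P.filter (fun v => (f v).card = 2)).card ≤
        T.maxDegree * (V2 \ L).card := Nat.mul_le_mul_left _ hfil2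
    rw [Nat.mul_add] at hsummed
    calc L.card + T.maxDegree * S0.card
        ≤ P.card + (T.maxDegree * (P.filter (fun v => (f v).card = 2)).card
            + T.maxDegree * ∑ u ∈ L, (f u).card) := by omega
      _ ≤ P.card + (T.maxDegree * (V2 \ L).card + T.maxDegree * ∑ u ∈ L, (f u).card) := by
          omega
      _ = P.card + T.maxDegree * ((V2 \ L).card + ∑ u ∈ L, (f u).card) := by
          rw [Nat.mul_add]
  -- assemble
  have hmain : L.card + T.maxDegree * T.domNum ≤ P.card + T.maxDegree * T.rainbowNum 2 := by
    have h1 := Nat.mul_le_mul_left T.maxDegree hγ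
    have h2 := Nat.mul_le_mul_left T.maxDegree hwge
    nlinarith [hcount, h1, h2]
  -- finish with ceiling arithmetic
  have hΔQ : (0 : ℚ) < (T.maxDegree : ℚ) := by exact_mod_cast hΔ
  have hceil : ⌈((L.card : ℚ) - (P.card : ℚ)) / (T.maxDegree : ℚ)⌉ ≤
      (T.rainbowNum 2 : ℤ) - (T.domNum : ℤ) := by
    rw [Int.ceil_le]
    rw [div_le_iff₀ hΔQ]
    push_cast
    have : (L.card : ℚ) + (T.maxDegree : ℚ) * (T.domNum : ℚ) ≤
        (P.card : ℚ) + (T.maxDegree : ℚ) * (T.rainbowNum 2 : ℚ) := by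
      exact_mod_cast hmain
    ring_nf
    ring_nf at this
    linarith
  linarith
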